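/- Let d ≥ 2 and let W be a linear subspace of ℝ^d with 1 ≤ dim W ≤ d − 1. There exists a constant C > 0 (depending only on d) such that for every R ≥ 0, ∫_{S^{d−1}} (1 + R · dist(y, W))^{−1} dσ(y) ≤ C (1 + R)^{−1/2}, where σ is the normalized (probability) surface measure on the unit sphere S^{d−1} ⊆ ℝ^d induced by Lebesgue measure, and dist(y, W) is the Euclidean distance from y to W. -/

import Mathlib

open MeasureTheory

noncomputable section

open Metric Set
open scoped ENNReal Pointwise

lemma coord_le_norm {d : ℕ} (y : EuclideanSpace ℝ (Fin d)) (i : Fin d) : |y i| ≤ ‖y‖ := by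
  rw [EuclideanSpace.norm_eq, ← Real.sqrt_sq_eq_abs]
  apply Real.sqrt_le_sqrt
  simpa using Finset.single_le_sum (f := fun j => y j ^ 2)
    (fun j _ => sq_nonneg _) (Finset.mem_univ i)

lemma slab_volume {d : ℕ} (hd : 1 ≤ d) {t : ℝ} (ht : 0 ≤ t)
    {n : EuclideanSpace ℝ (Fin d)} (hn : ‖n‖ = 1) :
    volume {x : EuclideanSpace ℝ (Fin d) | |inner ℝ n x| ≤ t ∧ ‖x‖ ≤ 1}
      ≤ ENNReal.ofReal (2 ^ d * t) := by
  haveI : NeZero d := ⟨by omega⟩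
  -- orthonormal basis with b 0 = n
  have hcard : Module.finrank ℝ (EuclideanSpace ℝ (Fin d)) = Fintype.card (Fin d) := by simp
  have horth : Orthonormal ℝ (({0} : Set (Fin d)).restrict (fun _ => n)) := by
    constructor
    · intro i; exact hn
    · intro i j hij
      exact absurd (Subsingleton.elim i j) hij
  obtain ⟨b, hb⟩ := horth.exists_orthonormalBasis_extension_of_card_eq hcard
  have hb0 : b 0 = n := hb 0 rfl
  -- target box in `Fin d → ℝ`
  set T : Set (Fin d → ℝ) := Set.pi Set.univ
    (fun i => if i = 0 then Icc (-t) t else Icc (-1) 1) with hT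
  have hTmeas : MeasurableSet T := by
    apply MeasurableSet.univ_pi
    intro i
    split <;> exact measurableSet_Icc
  -- the slab is contained in the preimage of the box under the composite map
  have hsub : {x : EuclideanSpace ℝ (Fin d) | |inner ℝ n x| ≤ t ∧ ‖x‖ ≤ 1}
      ⊆ (fun x => (MeasurableEquiv.toLp 2 (Fin d → ℝ)).symm (b.repr x)) ⁻¹' T := by
    rintro x ⟨h1, h2⟩ i -
    show b.repr x i ∈ _
    by_cases hi : i = 0
    · subst hi
      simp only [if_pos rfl]
      rw [b.repr_apply_apply, hb0]
      exact abs_le.mp h1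
    · simp only [if_neg hi]
      have hnx : ‖b.repr x‖ = ‖x‖ := b.repr.norm_map x
      have := (coord_le_norm (b.repr x) i).trans (hnx.le.trans h2)
      exact abs_le.mp this
  -- measure-preserving composite
  have hmp : MeasurePreserving
      (fun x : EuclideanSpace ℝ (Fin d) => (MeasurableEquiv.toLp 2 (Fin d → ℝ)).symm (b.repr x))
      volume volume :=
    (EuclideanSpace.volume_preserving_symm_measurableEquiv_toLp (Fin d)).comp b.measurePreserving_repr
  calc volume {x : EuclideanSpace ℝ (Fin d) | |inner ℝ n x| ≤ t ∧ ‖x‖ ≤ 1}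
      ≤ volume ((fun x : EuclideanSpace ℝ (Fin d) =>
          (MeasurableEquiv.toLp 2 (Fin d → ℝ)).symm (b.repr x)) ⁻¹' T) := measure_mono hsub
    _ = volume T := hmp.measure_preimage hTmeas.nullMeasurableSet
    _ ≤ ENNReal.ofReal (2 ^ d * t) := by
        rw [hT, volume_pi_pi]
        have : ∀ i : Fin d, volume (if i = 0 then Icc (-t) t else Icc (-1 : ℝ) 1)
            = if i = 0 then ENNReal.ofReal (2 * t) else ENNReal.ofReal 2 := by
          intro i; split <;> simp [Real.volume_Icc] <;> ring_nf <;> rw [ENNReal.ofReal_mul' (by norm_num), ENNReal.ofReal_ofNat]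
        rw [Finset.prod_congr rfl fun i _ => this i]
        rw [← Finset.mul_prod_erase Finset.univ _ (Finset.mem_univ (0 : Fin d))]
        rw [if_pos rfl]
        have herase : ∀ i ∈ Finset.univ.erase (0 : Fin d),
            (if i = 0 then ENNReal.ofReal (2 * t) else ENNReal.ofReal 2) = ENNReal.ofReal 2 := by
          intro i hi
          rw [if_neg (Finset.mem_erase.mp hi).1]
        rw [Finset.prod_congr rfl herase, Finset.prod_const, Finset.card_erase_of_mem (Finset.mem_univ _)]
        simp only [Finset.card_univ, Fintype.card_fin, if_true]
        rw [← ENNReal.ofReal_pow (by norm_num), ← ENNReal.ofReal_mul (by positivity)]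
        apply ENNReal.ofReal_le_ofReal
        have : (2:ℝ) ^ (d - 1) * 2 = 2 ^ d := by
          rw [mul_comm, ← pow_succ']
          congr 1; omega
        nlinarith [pow_nonneg (by norm_num : (0:ℝ) ≤ 2) (d-1)]



/-- The normalized (probability) surface measure on the unit sphere `S^{d-1} ⊆ ℝ^d` induced by
Lebesgue measure. -/
def sphereMeasure (d : ℕ) : Measure (Metric.sphere (0 : EuclideanSpace ℝ (Fin d)) 1) :=
  ((volume : Measure (EuclideanSpace ℝ (Fin d))).toSphere Set.univ)⁻¹ •
    (volume : Measure (EuclideanSpace ℝ (Fin d))).toSphere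

lemma band_measure {d : ℕ} (hd : 2 ≤ d) {t : ℝ} (ht : 0 ≤ t)
    {n : EuclideanSpace ℝ (Fin d)} (hn : ‖n‖ = 1) :
    (sphereMeasure d {y : sphere (0 : EuclideanSpace ℝ (Fin d)) 1 |
        |inner ℝ n (y : EuclideanSpace ℝ (Fin d))| ≤ t}).toReal
      ≤ 2 ^ d * t / (volume (ball (0 : EuclideanSpace ℝ (Fin d)) 1)).toReal := by
  haveI : Nontrivial (EuclideanSpace ℝ (Fin d)) := by
    apply Module.nontrivial_of_finrank_pos (R := ℝ)
    simp; omega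
  set V := volume (ball (0 : EuclideanSpace ℝ (Fin d)) 1) with hV
  have hV0 : V ≠ 0 := (measure_ball_pos _ _ one_pos).ne'
  have hVtop : V ≠ ⊤ := measure_ball_lt_top.ne
  set A : Set (sphere (0 : EuclideanSpace ℝ (Fin d)) 1) :=
    {y : sphere (0 : EuclideanSpace ℝ (Fin d)) 1 | |inner ℝ n (y : EuclideanSpace ℝ (Fin d))| ≤ t} with hA
  have hAmeas : MeasurableSet A := by
    have hc : Continuous fun y : sphere (0 : EuclideanSpace ℝ (Fin d)) 1 => |(inner ℝ n (y : EuclideanSpace ℝ (Fin d)) : ℝ)| :=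
      ((continuous_const.inner continuous_subtype_val)).abs
    exact (isClosed_le hc continuous_const).measurableSet
  have hdim : Module.finrank ℝ (EuclideanSpace ℝ (Fin d)) = d := by simp
  have hd0 : (d : ℝ≥0∞) ≠ 0 := by exact_mod_cast (by omega : d ≠ 0)
  have hdtop : (d : ℝ≥0∞) ≠ ⊤ := ENNReal.natCast_ne_top d
  -- the cone over A is contained in the slab
  have hsub : Set.Ioo (0 : ℝ) 1 • ((↑) '' A) ⊆ {x : EuclideanSpace ℝ (Fin d) | |inner ℝ n x| ≤ t ∧ ‖x‖ ≤ 1} := by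
    rintro x hx
    rw [Set.mem_smul] at hx
    obtain ⟨r, hr, y, hy, rfl⟩ := hx
    obtain ⟨z, hz, rfl⟩ := hy
    constructor
    · rw [real_inner_smul_right, abs_mul, abs_of_pos hr.1]
      calc r * |inner ℝ n (z : EuclideanSpace ℝ (Fin d))| ≤ 1 * |inner ℝ n (z : EuclideanSpace ℝ (Fin d))| := by
            apply mul_le_mul_of_nonneg_right hr.2.le (abs_nonneg _)
        _ ≤ t := by rw [one_mul]; exact hz
    · rw [norm_smul, Real.norm_eq_abs, abs_of_pos hr.1, mem_sphere_zero_iff_norm.mp z.2, mul_one]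
      exact hr.2.le
  have hts : (volume : Measure (EuclideanSpace ℝ (Fin d))).toSphere A ≤ (d : ℝ≥0∞) * ENNReal.ofReal (2 ^ d * t) := by
    rw [Measure.toSphere_apply' _ hAmeas, hdim]
    exact mul_le_mul_right ((measure_mono hsub).trans (slab_volume (by omega) ht hn)) _
  have hmain : sphereMeasure d A ≤ V⁻¹ * ENNReal.ofReal (2 ^ d * t) := by
    have h1 : sphereMeasure d A
        = ((volume : Measure (EuclideanSpace ℝ (Fin d))).toSphere Set.univ)⁻¹ * (volume : Measure (EuclideanSpace ℝ (Fin d))).toSphere A := by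
      simp [sphereMeasure]
    have h2 : (volume : Measure (EuclideanSpace ℝ (Fin d))).toSphere Set.univ = (d : ℝ≥0∞) * V := by
      rw [Measure.toSphere_apply_univ, hdim]
    rw [h1, h2, ENNReal.mul_inv (Or.inl hd0) (Or.inl hdtop)]
    calc (d : ℝ≥0∞)⁻¹ * V⁻¹ * (volume : Measure (EuclideanSpace ℝ (Fin d))).toSphere A
        ≤ (d : ℝ≥0∞)⁻¹ * V⁻¹ * ((d : ℝ≥0∞) * ENNReal.ofReal (2 ^ d * t)) :=
          mul_le_mul_right hts _
      _ = ((d : ℝ≥0∞)⁻¹ * (d : ℝ≥0∞)) * (V⁻¹ * ENNReal.ofReal (2 ^ d * t)) := by ring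
      _ = V⁻¹ * ENNReal.ofReal (2 ^ d * t) := by
          rw [ENNReal.inv_mul_cancel hd0 hdtop, one_mul]
  have hrhs_ne : V⁻¹ * ENNReal.ofReal (2 ^ d * t) ≠ ⊤ :=
    ENNReal.mul_ne_top (ENNReal.inv_ne_top.mpr hV0) ENNReal.ofReal_ne_top
  calc (sphereMeasure d A).toReal ≤ (V⁻¹ * ENNReal.ofReal (2 ^ d * t)).toReal :=
        ENNReal.toReal_mono hrhs_ne hmain
    _ = 2 ^ d * t / V.toReal := by
        rw [ENNReal.toReal_mul, ENNReal.toReal_inv, ENNReal.toReal_ofReal (by positivity),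
          div_eq_mul_inv, mul_comm]


/-- The basic sphere integral estimate: for `W` a linear subspace of `ℝ^d` with
`1 ≤ dim W ≤ d-1`, `∫_{S^{d-1}} (1 + R dist(y, W))⁻¹ dσ(y) = O((1+R)^{-1/2})`. -/
theorem sphere_integral_decay (d : ℕ) (hd : 2 ≤ d) :
    ∃ C : ℝ, 0 < C ∧
      ∀ W : Submodule ℝ (EuclideanSpace ℝ (Fin d)),
        1 ≤ Module.finrank ℝ W → Module.finrank ℝ W ≤ d - 1 →
        ∀ R : ℝ, 0 ≤ R →
          (∫ y, (1 + R * Metric.infDist (y : EuclideanSpace ℝ (Fin d)) (W : Set _))⁻¹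
              ∂(sphereMeasure d)) ≤
            C * (1 + R) ^ (-(1 / 2) : ℝ) := by
  haveI : Nontrivial (EuclideanSpace ℝ (Fin d)) := by
    apply Module.nontrivial_of_finrank_pos (R := ℝ)
    simp; omega
  have hdim : Module.finrank ℝ (EuclideanSpace ℝ (Fin d)) = d := by simp
  set B := (volume (ball (0 : EuclideanSpace ℝ (Fin d)) 1)).toReal with hB
  have hB0 : 0 < B :=
    ENNReal.toReal_pos (measure_ball_pos _ _ one_pos).ne' measure_ball_lt_top.ne
  -- `sphereMeasure d` is a probability measure
  haveI : IsProbabilityMeasure (sphereMeasure d) := by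
    constructor
    have h2 : (volume : Measure (EuclideanSpace ℝ (Fin d))).toSphere Set.univ
        = (d : ℝ≥0∞) * volume (ball (0 : EuclideanSpace ℝ (Fin d)) 1) := by
      rw [Measure.toSphere_apply_univ, hdim]
    have hne : (volume : Measure (EuclideanSpace ℝ (Fin d))).toSphere Set.univ ≠ 0 := by
      rw [h2]
      exact mul_ne_zero (by exact_mod_cast (by omega : d ≠ 0))
        (measure_ball_pos _ _ one_pos).ne'
    have htop : (volume : Measure (EuclideanSpace ℝ (Fin d))).toSphere Set.univ ≠ ⊤ := by
      rw [h2]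
      exact ENNReal.mul_ne_top (ENNReal.natCast_ne_top d) measure_ball_lt_top.ne
    simp only [sphereMeasure, Measure.smul_apply, smul_eq_mul]
    exact ENNReal.inv_mul_cancel hne htop
  refine ⟨2 ^ d / B + 2, by positivity, ?_⟩
  intro W hW1 hW2 R hR
  -- find a unit vector orthogonal to W
  have hWne : W ≠ ⊤ := by
    intro h
    rw [h, finrank_top, hdim] at hW2
    omega
  have hWo : Wᗮ ≠ ⊥ := by
    rwa [Ne, Submodule.orthogonal_eq_bot_iff]
  obtain ⟨v, hvW, hv0⟩ := Submodule.exists_mem_ne_zero_of_ne_bot hWo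
  set n : EuclideanSpace ℝ (Fin d) := ‖v‖⁻¹ • v with hn_def
  have hn : ‖n‖ = 1 := norm_smul_inv_norm hv0
  have hnW : n ∈ Wᗮ := Wᗮ.smul_mem _ hvW
  -- `|⟪n, y⟫| ≤ infDist y W`
  have hinf : ∀ y : EuclideanSpace ℝ (Fin d),
      |(inner ℝ n y : ℝ)| ≤ Metric.infDist y (W : Set (EuclideanSpace ℝ (Fin d))) := by
    intro y
    haveI : Nonempty (W : Set (EuclideanSpace ℝ (Fin d))) := ⟨⟨0, W.zero_mem⟩⟩
    rw [Metric.infDist_eq_iInf]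
    refine le_ciInf fun w => ?_
    have hnw : (inner ℝ n (w : EuclideanSpace ℝ (Fin d)) : ℝ) = 0 :=
      Submodule.inner_left_of_mem_orthogonal w.2 hnW
    calc |(inner ℝ n y : ℝ)| = |(inner ℝ n (y - (w : EuclideanSpace ℝ (Fin d))) : ℝ)| := by
          rw [inner_sub_right, hnw, sub_zero]
      _ ≤ ‖n‖ * ‖y - (w : EuclideanSpace ℝ (Fin d))‖ := abs_real_inner_le_norm n _
      _ = dist y (w : EuclideanSpace ℝ (Fin d)) := by rw [hn, one_mul, dist_eq_norm]
  -- parameters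
  set t : ℝ := (1 + R) ^ (-(1 / 2) : ℝ) with ht_def
  have h1R : (0:ℝ) < 1 + R := by linarith
  have ht0 : 0 < t := Real.rpow_pos_of_pos h1R _
  set u : ℝ := (1 + R) ^ ((1 / 2) : ℝ) with hu_def
  have hu0 : 0 < u := Real.rpow_pos_of_pos h1R _
  have hu1 : 1 ≤ u := Real.one_le_rpow (by linarith) (by norm_num)
  have hut : u * t = 1 := by
    rw [ht_def, hu_def, ← Real.rpow_add h1R]; norm_num
  have huu : u * u = 1 + R := by
    rw [hu_def, ← Real.rpow_add h1R]; norm_num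
  have hRt : 0 ≤ R * t := by positivity
  -- the band
  set A : Set (sphere (0 : EuclideanSpace ℝ (Fin d)) 1) :=
    {y : sphere (0 : EuclideanSpace ℝ (Fin d)) 1 |
      |(inner ℝ n (y : EuclideanSpace ℝ (Fin d)) : ℝ)| ≤ t} with hA_def
  have hAmeas : MeasurableSet A := by
    have hc : Continuous fun y : sphere (0 : EuclideanSpace ℝ (Fin d)) 1 =>
        |(inner ℝ n (y : EuclideanSpace ℝ (Fin d)) : ℝ)| :=
      (continuous_const.inner continuous_subtype_val).abs
    exact (isClosed_le hc continuous_const).measurableSet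
  -- pointwise bound
  have hpt : ∀ y : sphere (0 : EuclideanSpace ℝ (Fin d)) 1,
      (1 + R * Metric.infDist (y : EuclideanSpace ℝ (Fin d))
          (W : Set (EuclideanSpace ℝ (Fin d))))⁻¹
        ≤ A.indicator (fun _ => (1:ℝ)) y + (1 + R * t)⁻¹ := by
    intro y
    have hdnn : 0 ≤ Metric.infDist (y : EuclideanSpace ℝ (Fin d))
        (W : Set (EuclideanSpace ℝ (Fin d))) := Metric.infDist_nonneg
    by_cases hy : y ∈ A
    · rw [Set.indicator_of_mem hy]
      have h1 : (1 + R * Metric.infDist (y : EuclideanSpace ℝ (Fin d))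
          (W : Set (EuclideanSpace ℝ (Fin d))))⁻¹ ≤ 1 := by
        apply inv_le_one_of_one_le₀
        nlinarith
      have h2 : 0 ≤ (1 + R * t)⁻¹ := by positivity
      linarith
    · rw [Set.indicator_of_notMem hy, zero_add]
      have hyt : t ≤ |(inner ℝ n (y : EuclideanSpace ℝ (Fin d)) : ℝ)| := by
        have := hy
        rw [hA_def, Set.mem_setOf_eq] at this
        linarith [lt_of_not_ge this]
      have h3 : t ≤ Metric.infDist (y : EuclideanSpace ℝ (Fin d))
          (W : Set (EuclideanSpace ℝ (Fin d))) := hyt.trans (hinf _)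
      apply inv_anti₀ (by positivity)
      nlinarith
  -- integrability
  have hcont : Continuous fun y : sphere (0 : EuclideanSpace ℝ (Fin d)) 1 =>
      (1 + R * Metric.infDist (y : EuclideanSpace ℝ (Fin d))
        (W : Set (EuclideanSpace ℝ (Fin d))))⁻¹ := by
    apply Continuous.inv₀
    · exact continuous_const.add (continuous_const.mul
        ((Metric.continuous_infDist_pt _).comp continuous_subtype_val))
    · intro y
      have hdnn : 0 ≤ Metric.infDist (y : EuclideanSpace ℝ (Fin d))
          (W : Set (EuclideanSpace ℝ (Fin d))) := Metric.infDist_nonneg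
      positivity
  have hint_f : Integrable (fun y : sphere (0 : EuclideanSpace ℝ (Fin d)) 1 =>
      (1 + R * Metric.infDist (y : EuclideanSpace ℝ (Fin d))
        (W : Set (EuclideanSpace ℝ (Fin d))))⁻¹) (sphereMeasure d) := by
    refine Integrable.mono' (integrable_const 1) hcont.aestronglyMeasurable
      (Filter.Eventually.of_forall fun y => ?_)
    have hdnn : 0 ≤ Metric.infDist (y : EuclideanSpace ℝ (Fin d))
        (W : Set (EuclideanSpace ℝ (Fin d))) := Metric.infDist_nonneg
    rw [Real.norm_eq_abs, abs_of_nonneg (by positivity)]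
    apply inv_le_one_of_one_le₀
    nlinarith
  have hint_g : Integrable (A.indicator (fun _ => (1:ℝ))) (sphereMeasure d) :=
    (integrable_const (1:ℝ)).indicator hAmeas
  -- bound on the inverse term
  have h2t : (1 + R * t)⁻¹ ≤ 2 * t := by
    have hpos : (0:ℝ) < 1 + R * t := by linarith
    rw [← one_div, div_le_iff₀ hpos]
    nlinarith [mul_pos ht0 ht0, mul_pos hu0 ht0]
  calc (∫ y, (1 + R * Metric.infDist (y : EuclideanSpace ℝ (Fin d))
          (W : Set (EuclideanSpace ℝ (Fin d))))⁻¹ ∂(sphereMeasure d))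
      ≤ ∫ y, (A.indicator (fun _ => (1:ℝ)) y + (1 + R * t)⁻¹) ∂(sphereMeasure d) :=
        integral_mono hint_f (hint_g.add (integrable_const _)) hpt
    _ = ((sphereMeasure d) A).toReal + (1 + R * t)⁻¹ := by
        rw [integral_add hint_g (integrable_const _), integral_indicator_const (1:ℝ) hAmeas,
          integral_const, probReal_univ]
        simp [Measure.real]
    _ ≤ 2 ^ d * t / B + 2 * t :=
        add_le_add (band_measure hd ht0.le hn) h2t
    _ = (2 ^ d / B + 2) * t := by field_simp
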